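/- Let n ≥ 3, let Gₙ = F₂ × ⋯ (n) ⋯ × F₂ and let Bₙ ≤ Gₙ be the kernel of the homomorphism Gₙ → ℤ sending every generator to 1. Then the restriction to Bₙ of the projection of Gₙ onto its last factor is a surjective homomorphism Bₙ → F₂ whose kernel is isomorphic to Bₙ₋₁; in particular there is a short exact sequence 1 → Bₙ₋₁ → Bₙ → F₂ → 1. -/
import Mathlib

private noncomputable def chi15 : FreeGroup (Fin 2) →* Multiplicative ℤ :=
  FreeGroup.lift (fun _ : Fin 2 => Multiplicative.ofAdd (1:ℤ))

private lemma psi_formula15 {k : ℕ} (ψ : ((i : Fin k) → FreeGroup (Fin 2)) →* Multiplicative ℤ)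
    (hψ : ∀ (i : Fin k) (j : Fin 2),
      ψ (Pi.mulSingle i (FreeGroup.of j)) = Multiplicative.ofAdd 1)
    (g : (i : Fin k) → FreeGroup (Fin 2)) :
    ψ g = ∏ i, chi15 (g i) := by
  have h : ψ = ∏ i : Fin k, chi15.comp (Pi.evalMonoidHom (fun _ => FreeGroup (Fin 2)) i) := by
    apply MonoidHom.pi_ext
    intro i x
    rw [MonoidHom.finset_prod_apply]
    have hr : ∀ j : Fin k, (chi15.comp (Pi.evalMonoidHom (fun _ => FreeGroup (Fin 2)) j))
        (Pi.mulSingle i x) = if j = i then chi15 x else 1 := by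
      intro j
      by_cases hj : j = i
      · subst hj; simp
      · simp [hj, Pi.mulSingle_eq_of_ne hj]
    rw [Fintype.prod_eq_single i (fun j hj => by rw [hr j, if_neg hj])]
    rw [hr i, if_pos rfl]
    have : ψ.comp (MonoidHom.mulSingle (fun _ : Fin k => FreeGroup (Fin 2)) i) = chi15 := by
      apply FreeGroup.ext_hom
      intro a
      simp [hψ i a, chi15]
    calc ψ (Pi.mulSingle i x)
        = ψ.comp (MonoidHom.mulSingle (fun _ : Fin k => FreeGroup (Fin 2)) i) x := rfl
      _ = chi15 x := by rw [this]
  rw [h, MonoidHom.finset_prod_apply]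
  rfl

private lemma psi_single15 {k : ℕ} (ψ : ((i : Fin k) → FreeGroup (Fin 2)) →* Multiplicative ℤ)
    (hψ : ∀ (i : Fin k) (j : Fin 2),
      ψ (Pi.mulSingle i (FreeGroup.of j)) = Multiplicative.ofAdd 1)
    (i : Fin k) (x : FreeGroup (Fin 2)) :
    ψ (Pi.mulSingle i x) = chi15 x := by
  rw [psi_formula15 ψ hψ]
  rw [Fintype.prod_eq_single i (fun j hj => by simp [Pi.mulSingle_eq_of_ne hj])]
  simp



/-- For `n ≥ 3`, with `Gₙ = F₂ × ⋯ (n) ⋯ × F₂` and `Bₙ = ker ψₙ` (resp. `Bₙ₋₁ = ker ψₙ₋₁`)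
the kernel of the homomorphism sending every free generator of every factor to `1 ∈ ℤ`,
the restriction to `Bₙ` of the projection of `Gₙ` onto its last factor is a surjective
homomorphism `Bₙ → F₂` whose kernel is isomorphic to `Bₙ₋₁`. -/
theorem stmt_15 (n : ℕ) (hn : 3 ≤ n)
    (ψn : ((i : Fin n) → FreeGroup (Fin 2)) →* Multiplicative ℤ)
    (hψn : ∀ (i : Fin n) (j : Fin 2),
      ψn (Pi.mulSingle i (FreeGroup.of j)) = Multiplicative.ofAdd 1)
    (ψm : ((i : Fin (n - 1)) → FreeGroup (Fin 2)) →* Multiplicative ℤ)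
    (hψm : ∀ (i : Fin (n - 1)) (j : Fin 2),
      ψm (Pi.mulSingle i (FreeGroup.of j)) = Multiplicative.ofAdd 1) :
    Function.Surjective
      ((Pi.evalMonoidHom (fun _ : Fin n => FreeGroup (Fin 2)) ⟨n - 1, by omega⟩).comp
        ψn.ker.subtype) ∧
    Nonempty
      (((Pi.evalMonoidHom (fun _ : Fin n => FreeGroup (Fin 2)) ⟨n - 1, by omega⟩).comp
          ψn.ker.subtype).ker ≃* ψm.ker) := by
  have h1 : n - 1 + 1 = n := by omega
  have hsplit : ∀ f : Fin n → Multiplicative ℤ,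
      ∏ i, f i = (∏ i : Fin (n-1), f ⟨i.1, by omega⟩) * f ⟨n - 1, by omega⟩ := by
    intro f
    have := Fintype.prod_equiv (finCongr h1) (fun i => f (finCongr h1 i)) f (fun i => rfl)
    rw [← this, Fin.prod_univ_castSucc]
    rfl
  constructor
  · intro w
    set e : ℤ := Multiplicative.toAdd (chi15 w) with he
    set c : FreeGroup (Fin 2) := FreeGroup.of (0 : Fin 2) ^ e with hc
    have hχc : chi15 c = chi15 w := by
      rw [hc, map_zpow]
      show (FreeGroup.lift (fun _ : Fin 2 => Multiplicative.ofAdd (1:ℤ))) (FreeGroup.of 0) ^ e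
          = chi15 w
      rw [FreeGroup.lift_apply_of]
      rw [he, ← ofAdd_zsmul]
      simp
    set g : (i : Fin n) → FreeGroup (Fin 2) :=
      Pi.mulSingle (⟨n - 1, by omega⟩ : Fin n) w * Pi.mulSingle (⟨0, by omega⟩ : Fin n) c⁻¹
      with hg
    have hker : g ∈ ψn.ker := by
      rw [MonoidHom.mem_ker, hg, map_mul, psi_single15 ψn hψn, psi_single15 ψn hψn,
        map_inv, hχc]
      exact mul_inv_cancel _
    refine ⟨⟨g, hker⟩, ?_⟩
    show g ⟨n - 1, by omega⟩ = w
    rw [hg, Pi.mul_apply, Pi.mulSingle_eq_same,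
      Pi.mulSingle_eq_of_ne (by simp [Fin.ext_iff]; omega), mul_one]
  · have hmemK : ∀ x : ψn.ker,
        (x ∈ ((Pi.evalMonoidHom (fun _ : Fin n => FreeGroup (Fin 2)) ⟨n - 1, by omega⟩).comp
          ψn.ker.subtype).ker ↔ (x : (i : Fin n) → FreeGroup (Fin 2)) ⟨n - 1, by omega⟩ = 1) :=
      fun x => Iff.rfl
    refine ⟨{
      toFun := fun x => ⟨fun i => (x.1 : (i : Fin n) → FreeGroup (Fin 2)) ⟨i.1, by omega⟩, ?_⟩
      invFun := fun y => ⟨⟨fun i => if hi : i.1 < n - 1 then y.1 ⟨i.1, hi⟩ else 1, ?_⟩, ?_⟩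
      left_inv := ?_
      right_inv := ?_
      map_mul' := ?_ }⟩
    · -- membership in ψm.ker
      rcases x with ⟨⟨g, hg⟩, hx⟩
      rw [MonoidHom.mem_ker, psi_formula15 ψm hψm]
      rw [MonoidHom.mem_ker, psi_formula15 ψn hψn, hsplit] at hg
      rw [hmemK] at hx
      simp only at hx ⊢
      rw [← hg]
      simp [hx]
    · -- membership in ψn.ker
      rw [MonoidHom.mem_ker, psi_formula15 ψn hψn, hsplit]
      have hy := y.2
      rw [MonoidHom.mem_ker, psi_formula15 ψm hψm] at hy
      have hlast : (if hi : (n:ℕ) - 1 < n - 1 then y.1 ⟨n-1, hi⟩ else 1) = 1 := by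
        rw [dif_neg (by omega)]
      rw [hlast]
      have : ∀ i : Fin (n-1),
          (if hi : (⟨i.1, by omega⟩ : Fin n).1 < n - 1 then y.1 ⟨i.1, hi⟩ else 1) = y.1 i := by
        intro i
        rw [dif_pos i.2]
      calc (∏ i : Fin (n-1),
            chi15 (if hi : (⟨i.1, by omega⟩ : Fin n).1 < n - 1 then y.1 ⟨i.1, hi⟩ else 1))
            * chi15 1
          = (∏ i : Fin (n-1), chi15 (y.1 i)) * 1 := by
            rw [map_one]
            congr 1
            exact Finset.prod_congr rfl (fun i _ => by rw [this i])
        _ = 1 := by rw [mul_one, hy]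
    · -- last coordinate is 1
      rw [hmemK]
      simp only
      rw [dif_neg (by omega)]
    · -- left_inv
      rintro ⟨⟨g, hg⟩, hx⟩
      rw [hmemK] at hx
      ext i
      simp only
      by_cases hi : i.1 < n - 1
      · rw [dif_pos hi]
      · rw [dif_neg hi]
        have : i = ⟨n - 1, by omega⟩ := by
          apply Fin.ext
          have := i.2
          simp only
          omega
        rw [this]
        exact hx.symm
    · -- right_inv
      intro y
      ext i
      simp only
      rw [dif_pos i.2]
    · -- map_mul
      intro x y
      ext i
      rfl
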